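/- Let K be a nonempty finite type and, for each κ ∈ K, let I κ and J κ be nonempty finite types; set Ω = Σ κ, (I κ × J κ). Let ρ : Matrix Ω Ω ℂ be positive semidefinite with trace 1 and block diagonal, ρ = ∑_κ p_κ ρ̂_κ, where p_κ ≥ 0, ∑_κ p_κ = 1, each ρ_κ is a positive semidefinite trace-1 matrix on I κ × J κ, and ρ̂_κ denotes its embedding into block κ of Ω (zero outside block κ). Then the robustness of ρ equals the weighted sum of the bipartite robustnesses of its blocks: sInf {t : ℝ | t ≥ 0 ∧ ∃ block-separable σ on Ω, (1/(1+t)) • (ρ + t • σ) is block-separable} = ∑_κ p_κ · sInf {t : ℝ | t ≥ 0 ∧ ∃ Kronecker-separable σ_κ on I κ × J κ, (1/(1+t)) • (ρ_κ + t • σ_κ) is Kronecker-separable}. -/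

import Mathlib

open scoped BigOperators ComplexOrder Kronecker

/-- A matrix on `Ω = Σ κ, I κ × J κ` is block-separable if it is a finite convex
combination of rank-one projections onto unit vectors each supported in a single
block and there of product form. -/
def BlockSep {K : Type*} [Fintype K] {I J : K → Type*}
    [∀ κ, Fintype (I κ)] [∀ κ, Fintype (J κ)]
    (ρ : Matrix ((κ : K) × (I κ × J κ)) ((κ : K) × (I κ × J κ)) ℂ) : Prop :=
  ∃ (n : ℕ) (lam : Fin n → ℝ) (v : Fin n → ((κ : K) × (I κ × J κ)) → ℂ),
    (∀ t, 0 ≤ lam t) ∧ (∑ t, lam t = 1) ∧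
    (∀ t, ∑ a, Complex.normSq (v t a) = 1) ∧
    (∀ t, ∃ (κ : K) (x : I κ → ℂ) (y : J κ → ℂ),
      (∀ (i : I κ) (j : J κ), v t ⟨κ, (i, j)⟩ = x i * y j) ∧
      (∀ κ' : K, κ' ≠ κ → ∀ b : I κ' × J κ', v t ⟨κ', b⟩ = 0)) ∧
    ρ = ∑ t, (lam t : ℂ) • Matrix.of (fun a b => v t a * starRingEnd ℂ (v t b))

/-- A matrix on `I × J` is Kronecker-separable if it is a finite convex combination
of Kronecker products of positive semidefinite trace-one matrices. -/
def KronSep {I J : Type*} [Fintype I] [Fintype J]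
    (ρ : Matrix (I × J) (I × J) ℂ) : Prop :=
  ∃ (n : ℕ) (lam : Fin n → ℝ)
    (A : Fin n → Matrix I I ℂ) (B : Fin n → Matrix J J ℂ),
    (∀ t, 0 ≤ lam t) ∧ (∑ t, lam t = 1) ∧
    (∀ t, (A t).PosSemidef ∧ (A t).trace = 1) ∧
    (∀ t, (B t).PosSemidef ∧ (B t).trace = 1) ∧
    ρ = ∑ t, (lam t : ℂ) • (A t ⊗ₖ B t)

/-- The embedding of a matrix on the block `I κ × J κ` into a matrix on
`Ω = Σ κ, I κ × J κ`, vanishing outside block `κ`. -/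
def embedBlock {K : Type*} [DecidableEq K] {I J : K → Type*} (κ : K)
    (A : Matrix (I κ × J κ) (I κ × J κ) ℂ) :
    Matrix ((κ' : K) × (I κ' × J κ')) ((κ' : K) × (I κ' × J κ')) ℂ :=
  Matrix.of fun a b =>
    if h : a.1 = κ ∧ b.1 = κ then A (h.1 ▸ a.2) (h.2 ▸ b.2) else 0



namespace Prop4

set_option linter.unusedSectionVars false

variable {α : Type*} [Fintype α]

/-- generic finite nonneg-combination cone over a generator set -/
def coneOf (G : Set (Matrix α α ℂ)) (ρ : Matrix α α ℂ) : Prop :=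
  ∃ (n : ℕ) (c : Fin n → ℝ) (g : Fin n → Matrix α α ℂ),
    (∀ t, 0 ≤ c t) ∧ (∀ t, g t ∈ G) ∧ ρ = ∑ t, (c t : ℂ) • g t

lemma coneOf_zero (G : Set (Matrix α α ℂ)) : coneOf G 0 :=
  ⟨0, ![], ![], by simp, by simp, by simp⟩

lemma coneOf_gen {G : Set (Matrix α α ℂ)} {g : Matrix α α ℂ} (hg : g ∈ G) :
    coneOf G g :=
  ⟨1, ![1], ![g], by simp, by simp [hg], by simp⟩

lemma coneOf_add {G : Set (Matrix α α ℂ)} {ρ σ : Matrix α α ℂ}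
    (hρ : coneOf G ρ) (hσ : coneOf G σ) : coneOf G (ρ + σ) := by
  obtain ⟨n, c, g, hc, hg, rfl⟩ := hρ
  obtain ⟨m, d, h, hd, hh, rfl⟩ := hσ
  refine ⟨n + m, Fin.append c d, Fin.append g h, ?_, ?_, ?_⟩
  · intro t
    refine Fin.addCases (fun i => ?_) (fun i => ?_) t <;>
      simp [Fin.append_left, Fin.append_right, hc, hd]
  · intro t
    refine Fin.addCases (fun i => ?_) (fun i => ?_) t <;>
      simp [Fin.append_left, Fin.append_right, hg, hh]
  · rw [Fin.sum_univ_add]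
    simp [Fin.append_left, Fin.append_right]

lemma coneOf_smul {G : Set (Matrix α α ℂ)} {ρ : Matrix α α ℂ} {r : ℝ}
    (hr : 0 ≤ r) (hρ : coneOf G ρ) : coneOf G ((r : ℂ) • ρ) := by
  obtain ⟨n, c, g, hc, hg, rfl⟩ := hρ
  refine ⟨n, fun t => r * c t, g, fun t => mul_nonneg hr (hc t), hg, ?_⟩
  rw [Finset.smul_sum]
  congr 1; funext t
  push_cast
  rw [smul_smul]

lemma coneOf_sum {G : Set (Matrix α α ℂ)} {ι : Type*} (s : Finset ι)
    (f : ι → Matrix α α ℂ) (hf : ∀ i ∈ s, coneOf G (f i)) :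
    coneOf G (∑ i ∈ s, f i) := by
  classical
  induction s using Finset.induction with
  | empty => simpa using coneOf_zero G
  | insert _ _ hx ih =>
    rw [Finset.sum_insert hx]
    exact coneOf_add (hf _ (Finset.mem_insert_self _ _))
      (ih fun i hi => hf i (Finset.mem_insert_of_mem hi))

/-- trace data for generators: nonneg real traces, vanishing ⟹ zero matrix -/
def GoodGens (G : Set (Matrix α α ℂ)) : Prop :=
  ∀ g ∈ G, ∃ r : ℝ, 0 ≤ r ∧ g.trace = (r : ℂ) ∧ (r = 0 → g = 0)

lemma coneOf_trace {G : Set (Matrix α α ℂ)} (hG : GoodGens G) {ρ : Matrix α α ℂ}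
    (hρ : coneOf G ρ) : ∃ r : ℝ, 0 ≤ r ∧ ρ.trace = (r : ℂ) := by
  obtain ⟨n, c, g, hc, hg, rfl⟩ := hρ
  choose r hr htr _ using fun t => hG (g t) (hg t)
  refine ⟨∑ t, c t * r t, Finset.sum_nonneg fun t _ => mul_nonneg (hc t) (hr t), ?_⟩
  rw [Matrix.trace_sum]
  push_cast
  congr 1; funext t
  rw [Matrix.trace_smul, htr]
  simp [smul_eq_mul]

lemma coneOf_trace_zero {G : Set (Matrix α α ℂ)} (hG : GoodGens G) {ρ : Matrix α α ℂ}
    (hρ : coneOf G ρ) (h0 : ρ.trace = 0) : ρ = 0 := by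
  obtain ⟨n, c, g, hc, hg, rfl⟩ := hρ
  choose r hr htr hz using fun t => hG (g t) (hg t)
  have hts : (∑ t, c t * r t : ℝ) = 0 := by
    have : ((∑ t, c t * r t : ℝ) : ℂ) = 0 := by
      rw [← h0, Matrix.trace_sum]
      push_cast
      congr 1; funext t
      rw [Matrix.trace_smul, htr]
      simp [smul_eq_mul]
    exact_mod_cast this
  have hterm : ∀ t ∈ Finset.univ, c t * r t = (0:ℝ) := by
    refine (Finset.sum_eq_zero_iff_of_nonneg fun t _ => mul_nonneg (hc t) (hr t)).mp hts
  refine Finset.sum_eq_zero fun t _ => ?_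
  rcases mul_eq_zero.mp (hterm t (Finset.mem_univ t)) with h | h
  · rw [h]; simp
  · rw [hz t h]; simp


section RankOne
variable {α : Type*} [Fintype α]

/-- rank one matrix `v v*` -/
def rankOne (v : α → ℂ) : Matrix α α ℂ :=
  Matrix.of fun a b => v a * starRingEnd ℂ (v b)

open Matrix in
lemma rankOne_eq (v : α → ℂ) :
    rankOne v = (Matrix.replicateRow Unit (star v))ᴴ * (Matrix.replicateRow Unit (star v)) := by
  ext a b
  simp [rankOne, Matrix.mul_apply, Matrix.replicateRow_apply, mul_comm]

lemma rankOne_posSemidef (v : α → ℂ) : (rankOne v).PosSemidef := by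
  rw [rankOne_eq]; exact Matrix.posSemidef_conjTranspose_mul_self _

lemma rankOne_trace (v : α → ℂ) :
    (rankOne v).trace = ((∑ a, Complex.normSq (v a) : ℝ) : ℂ) := by
  simp only [Matrix.trace, Matrix.diag, rankOne, Matrix.of_apply]
  push_cast
  congr 1; funext a
  rw [Complex.mul_conj]

open Matrix in
lemma rankOne_conjTranspose (v : α → ℂ) : (rankOne v)ᴴ = rankOne v := by
  ext a b; simp [rankOne, mul_comm]

lemma rankOne_eq_zero {v : α → ℂ} (h : ∑ a, Complex.normSq (v a) = 0) :
    rankOne v = 0 := by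
  have hv : ∀ a, v a = 0 := by
    intro a
    have := (Finset.sum_eq_zero_iff_of_nonneg
      (fun a _ => Complex.normSq_nonneg (v a))).mp h a (Finset.mem_univ a)
    exact Complex.normSq_eq_zero.mp this
  ext a b; simp [rankOne, hv]

lemma posSemidef_real_smul {M : Matrix α α ℂ} (hM : M.PosSemidef) {r : ℝ} (hr : 0 ≤ r) :
    (((r : ℂ)) • M).PosSemidef := by
  rw [Matrix.posSemidef_iff_dotProduct_mulVec] at hM ⊢
  constructor
  · rw [Matrix.IsHermitian, Matrix.conjTranspose_smul, hM.1.eq]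
    simp [Complex.star_def, Complex.conj_ofReal]
  · intro x
    rw [Matrix.smul_mulVec, dotProduct_smul]
    exact smul_nonneg (by exact_mod_cast hr) (hM.2 x)

open scoped MatrixOrder in
lemma psd_sum_rankOne {A : Matrix α α ℂ} (hA : A.PosSemidef) :
    ∃ x : α → α → ℂ, A = ∑ k, rankOne (x k) := by
  classical
  obtain ⟨C, hC⟩ : ∃ C : Matrix α α ℂ, A = Matrix.conjTranspose C * C :=
    CStarAlgebra.nonneg_iff_eq_star_mul_self.mp hA.nonneg
  refine ⟨fun k a => starRingEnd ℂ (C k a), ?_⟩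
  ext a b
  rw [hC]
  simp only [Matrix.mul_apply, Matrix.conjTranspose_apply, Matrix.sum_apply, rankOne,
    Matrix.of_apply, RingHom.id_apply, starRingEnd_self_apply]
  exact Finset.sum_congr rfl fun k _ => by simp [mul_comm]

end RankOne

section Kron
variable {I J : Type*} [Fintype I] [Fintype J]

def prodVec (x : I → ℂ) (y : J → ℂ) : I × J → ℂ := fun a => x a.1 * y a.2

def prodMat (x : I → ℂ) (y : J → ℂ) : Matrix (I × J) (I × J) ℂ := rankOne (prodVec x y)

def prodGens (I J : Type*) [Fintype I] [Fintype J] : Set (Matrix (I × J) (I × J) ℂ) :=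
  {M | ∃ x y, M = prodMat x y}

lemma prodVec_normSq (x : I → ℂ) (y : J → ℂ) :
    ∑ a, Complex.normSq (prodVec x y a) =
      (∑ i, Complex.normSq (x i)) * (∑ j, Complex.normSq (y j)) := by
  rw [Finset.sum_mul_sum, Fintype.sum_prod_type]
  exact Finset.sum_congr rfl fun i _ => Finset.sum_congr rfl fun j _ => by
    simp [prodVec, Complex.normSq_mul]

lemma prodMat_trace (x : I → ℂ) (y : J → ℂ) :
    (prodMat x y).trace =
      (((∑ i, Complex.normSq (x i)) * (∑ j, Complex.normSq (y j)) : ℝ) : ℂ) := by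
  rw [prodMat, rankOne_trace, prodVec_normSq]

lemma goodGens_prodGens : GoodGens (prodGens I J) := by
  rintro g ⟨x, y, rfl⟩
  refine ⟨(∑ i, Complex.normSq (x i)) * (∑ j, Complex.normSq (y j)),
    mul_nonneg (Finset.sum_nonneg fun _ _ => Complex.normSq_nonneg _)
      (Finset.sum_nonneg fun _ _ => Complex.normSq_nonneg _),
    prodMat_trace x y, fun h => ?_⟩
  exact rankOne_eq_zero (by rw [prodVec_normSq]; exact h)

lemma rankOne_kronecker (x : I → ℂ) (y : J → ℂ) :
    rankOne x ⊗ₖ rankOne y = prodMat x y := by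
  ext ⟨i, j⟩ ⟨i', j'⟩
  simp only [Matrix.kroneckerMap_apply, rankOne, prodMat, prodVec, Matrix.of_apply, map_mul]
  ring

abbrev kcone (ρ : Matrix (I × J) (I × J) ℂ) : Prop := coneOf (prodGens I J) ρ

lemma sumRankOne_kron (x : I → I → ℂ) (y : J → J → ℂ) :
    (∑ k, rankOne (x k)) ⊗ₖ (∑ l, rankOne (y l)) =
      ∑ kl : I × J, prodMat (x kl.1) (y kl.2) := by
  ext ⟨i, j⟩ ⟨i', j'⟩
  simp only [Matrix.kroneckerMap_apply, Matrix.sum_apply, rankOne, prodMat, prodVec,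
    Matrix.of_apply, map_mul]
  rw [Finset.sum_mul_sum, Fintype.sum_prod_type]
  exact Finset.sum_congr rfl fun k _ => Finset.sum_congr rfl fun l _ => by ring

lemma kcone_kronecker {A : Matrix I I ℂ} {B : Matrix J J ℂ}
    (hA : A.PosSemidef) (hB : B.PosSemidef) : kcone (A ⊗ₖ B) := by
  obtain ⟨x, rfl⟩ := psd_sum_rankOne hA
  obtain ⟨y, rfl⟩ := psd_sum_rankOne hB
  rw [sumRankOne_kron]
  exact coneOf_sum _ _ fun kl _ => coneOf_gen ⟨_, _, rfl⟩

end Kron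

section KronIff
variable {I J : Type*} [Fintype I] [Fintype J]

noncomputable def stdv {α : Type*} (a₀ : α) : α → ℂ :=
  fun a => @ite _ (a = a₀) (Classical.dec _) 1 0

lemma stdv_normSq {α : Type*} [Fintype α] (a₀ : α) :
    ∑ a, Complex.normSq (stdv a₀ a) = 1 := by
  classical
  have : ∀ a, Complex.normSq (stdv a₀ a) = if a = a₀ then 1 else 0 := by
    intro a
    by_cases h : a = a₀ <;> simp [stdv, h]
  rw [Finset.sum_congr rfl fun a _ => this a]
  simp

lemma kcone_of_kronSep {ρ : Matrix (I × J) (I × J) ℂ} (h : KronSep ρ) :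
    kcone ρ ∧ ρ.trace = 1 := by
  obtain ⟨n, lam, A, B, hlam, hsum, hA, hB, rfl⟩ := h
  constructor
  · exact coneOf_sum _ _ fun t _ =>
      coneOf_smul (hlam t) (kcone_kronecker (hA t).1 (hB t).1)
  · rw [Matrix.trace_sum]
    have : ∀ t, ((lam t : ℂ) • (A t ⊗ₖ B t)).trace = (lam t : ℂ) := by
      intro t
      rw [Matrix.trace_smul, Matrix.trace_kronecker, (hA t).2, (hB t).2]
      simp
    rw [Finset.sum_congr rfl fun t _ => this t]
    exact_mod_cast congrArg (Complex.ofReal) hsum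

/-- normalized (or default) state attached to a vector -/
noncomputable def nstate {α : Type*} [Fintype α] [Nonempty α] (x : α → ℂ) :
    Matrix α α ℂ :=
  if (∑ a, Complex.normSq (x a)) = 0 then rankOne (stdv (Classical.arbitrary α))
  else ((((∑ a, Complex.normSq (x a))⁻¹ : ℝ)) : ℂ) • rankOne x

lemma nstate_psd {α : Type*} [Fintype α] [Nonempty α] (x : α → ℂ) :
    (nstate x).PosSemidef ∧ (nstate x).trace = 1 := by
  unfold nstate
  by_cases hx : (∑ a, Complex.normSq (x a)) = 0
  · rw [if_pos hx]
    exact ⟨rankOne_posSemidef _, by rw [rankOne_trace, stdv_normSq]; simp⟩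
  · rw [if_neg hx]
    refine ⟨posSemidef_real_smul (rankOne_posSemidef _)
      (inv_nonneg.mpr (Finset.sum_nonneg fun _ _ => Complex.normSq_nonneg _)), ?_⟩
    rw [Matrix.trace_smul, rankOne_trace, smul_eq_mul, ← Complex.ofReal_mul,
      inv_mul_cancel₀ hx, Complex.ofReal_one]

lemma nstate_smul_kron [Nonempty I] [Nonempty J] {c : ℝ} (x : I → ℂ) (y : J → ℂ) :
    ((c * ((∑ i, Complex.normSq (x i)) * (∑ j, Complex.normSq (y j))) : ℝ) : ℂ) •
      (nstate x ⊗ₖ nstate y) = (c : ℂ) • prodMat x y := by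
  by_cases hx : (∑ i, Complex.normSq (x i)) = 0
  · have hx0 : prodMat x y = 0 :=
      rankOne_eq_zero (by rw [prodVec_normSq, hx, zero_mul])
    rw [hx0, hx]
    simp
  · by_cases hy : (∑ j, Complex.normSq (y j)) = 0
    · have hy0 : prodMat x y = 0 :=
        rankOne_eq_zero (by rw [prodVec_normSq, hy, mul_zero])
      rw [hy0, hy]
      simp
    · unfold nstate
      rw [if_neg hx, if_neg hy, Matrix.smul_kronecker,
        Matrix.kronecker_smul, rankOne_kronecker, smul_smul, smul_smul]
      congr 1
      have hx' : ((∑ i, Complex.normSq (x i) : ℝ) : ℂ) ≠ 0 := by exact_mod_cast hx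
      have hy' : ((∑ j, Complex.normSq (y j) : ℝ) : ℂ) ≠ 0 := by exact_mod_cast hy
      push_cast at hx' hy' ⊢
      field_simp

lemma kronSep_of_kcone [Nonempty I] [Nonempty J] {ρ : Matrix (I × J) (I × J) ℂ}
    (h : kcone ρ) (htr : ρ.trace = 1) : KronSep ρ := by
  classical
  obtain ⟨n, c, g, hc, hg, rfl⟩ := h
  choose x y hxy using hg
  refine ⟨n, fun t => c t * ((∑ i, Complex.normSq (x t i)) * (∑ j, Complex.normSq (y t j))),
    fun t => nstate (x t), fun t => nstate (y t),
    fun t => mul_nonneg (hc t) (mul_nonneg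
      (Finset.sum_nonneg fun _ _ => Complex.normSq_nonneg _)
      (Finset.sum_nonneg fun _ _ => Complex.normSq_nonneg _)), ?_,
    fun t => nstate_psd (x t), fun t => nstate_psd (y t), ?_⟩
  · have h2 : (∑ t, (c t : ℂ) • g t).trace =
        ((∑ t, c t * ((∑ i, Complex.normSq (x t i)) * (∑ j, Complex.normSq (y t j))) : ℝ) : ℂ) := by
      rw [Matrix.trace_sum]
      push_cast
      refine Finset.sum_congr rfl fun t _ => ?_
      rw [Matrix.trace_smul, hxy t, prodMat_trace]
      push_cast
      simp [smul_eq_mul]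
    rw [h2] at htr
    exact_mod_cast htr
  · exact Finset.sum_congr rfl fun t _ => by rw [nstate_smul_kron, hxy t]
end KronIff

section Block
variable {K : Type*} [Fintype K] [DecidableEq K] {I J : K → Type*}
  [∀ κ, Fintype (I κ)] [∀ κ, Fintype (J κ)]

local notation "Ω" => (κ : K) × (I κ × J κ)

lemma embedBlock_apply (κ : K) (A : Matrix (I κ × J κ) (I κ × J κ) ℂ)
    (a b : Ω) (h₁ : a.1 = κ) (h₂ : b.1 = κ) :
    embedBlock κ A a b = A (h₁ ▸ a.2) (h₂ ▸ b.2) := dif_pos ⟨h₁, h₂⟩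

lemma embedBlock_apply_same (κ : K) (A : Matrix (I κ × J κ) (I κ × J κ) ℂ)
    (b₁ b₂ : I κ × J κ) : embedBlock κ A ⟨κ, b₁⟩ ⟨κ, b₂⟩ = A b₁ b₂ := by
  simp [embedBlock]

lemma embedBlock_apply_ne_left {κ : K} (A : Matrix (I κ × J κ) (I κ × J κ) ℂ)
    {a : Ω} (h : a.1 ≠ κ) (b : Ω) : embedBlock κ A a b = 0 := by
  simp only [embedBlock, Matrix.of_apply]
  rw [dif_neg]
  rintro ⟨h1, -⟩; exact h h1

lemma embedBlock_apply_ne_right {κ : K} (A : Matrix (I κ × J κ) (I κ × J κ) ℂ)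
    (a : Ω) {b : Ω} (h : b.1 ≠ κ) : embedBlock κ A a b = 0 := by
  simp only [embedBlock, Matrix.of_apply]
  rw [dif_neg]
  rintro ⟨-, h2⟩; exact h h2

lemma embedBlock_zero (κ : K) : embedBlock (I := I) (J := J) κ 0 = 0 := by
  ext a b
  by_cases h₁ : a.1 = κ
  · by_cases h₂ : b.1 = κ
    · rw [embedBlock_apply κ _ a b h₁ h₂]; simp
    · rw [embedBlock_apply_ne_right _ _ h₂]; simp
  · rw [embedBlock_apply_ne_left _ h₁]; simp

lemma embedBlock_add (κ : K) (A B : Matrix (I κ × J κ) (I κ × J κ) ℂ) :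
    embedBlock κ (A + B) = embedBlock κ A + embedBlock κ B := by
  ext a b
  by_cases h₁ : a.1 = κ
  · by_cases h₂ : b.1 = κ
    · rw [Matrix.add_apply, embedBlock_apply κ _ a b h₁ h₂, embedBlock_apply κ A a b h₁ h₂,
        embedBlock_apply κ B a b h₁ h₂]
      rfl
    · simp [Matrix.add_apply, embedBlock_apply_ne_right _ _ h₂]
  · simp [Matrix.add_apply, embedBlock_apply_ne_left _ h₁]

lemma embedBlock_smul (κ : K) (c : ℂ) (A : Matrix (I κ × J κ) (I κ × J κ) ℂ) :
    embedBlock κ (c • A) = c • embedBlock κ A := by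
  ext a b
  by_cases h₁ : a.1 = κ
  · by_cases h₂ : b.1 = κ
    · rw [Matrix.smul_apply, embedBlock_apply κ _ a b h₁ h₂, embedBlock_apply κ A a b h₁ h₂]
      rfl
    · simp [Matrix.smul_apply, embedBlock_apply_ne_right _ _ h₂]
  · simp [Matrix.smul_apply, embedBlock_apply_ne_left _ h₁]

lemma sigma_sum {M : Type*} [AddCommMonoid M] (f : Ω → M) : ∑ a : Ω, f a = ∑ κ : K, ∑ b : I κ × J κ, f ⟨κ, b⟩ := by
  rw [← Finset.univ_sigma_univ, Finset.sum_sigma]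

lemma embedBlock_trace (κ : K) (A : Matrix (I κ × J κ) (I κ × J κ) ℂ) :
    (embedBlock κ A).trace = A.trace := by
  rw [Matrix.trace, show (∑ a, (embedBlock κ A).diag a) = ∑ κ' : K, ∑ b : I κ' × J κ',
      embedBlock κ A ⟨κ', b⟩ ⟨κ', b⟩ from sigma_sum _]
  rw [Finset.sum_eq_single κ]
  · exact Finset.sum_congr rfl fun b _ => embedBlock_apply_same κ A b b
  · intro κ' _ h
    exact Finset.sum_eq_zero fun b _ => embedBlock_apply_ne_left _ h _
  · intro h
    exact absurd (Finset.mem_univ κ) h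

/-- compression onto block κ -/
def blk (κ : K) (M : Matrix Ω Ω ℂ) : Matrix (I κ × J κ) (I κ × J κ) ℂ :=
  Matrix.of fun a b => M ⟨κ, a⟩ ⟨κ, b⟩

lemma blk_embed_same (κ : K) (A : Matrix (I κ × J κ) (I κ × J κ) ℂ) :
    blk κ (embedBlock κ A) = A := by
  ext a b; exact embedBlock_apply_same κ A a b

lemma blk_embed_ne {κ κ' : K} (h : κ' ≠ κ) (A : Matrix (I κ' × J κ') (I κ' × J κ') ℂ) :
    blk κ (embedBlock κ' A) = 0 := by
  ext a b
  simp only [blk, Matrix.of_apply, Matrix.zero_apply]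
  exact embedBlock_apply_ne_left _ (fun hh => h hh.symm) _

lemma blk_add (κ : K) (M N : Matrix Ω Ω ℂ) : blk κ (M + N) = blk κ M + blk κ N := rfl

lemma blk_smul (κ : K) (c : ℂ) (M : Matrix Ω Ω ℂ) : blk κ (c • M) = c • blk κ M := rfl

lemma blk_sum (κ : K) {ι : Type*} (s : Finset ι) (f : ι → Matrix Ω Ω ℂ) :
    blk κ (∑ i ∈ s, f i) = ∑ i ∈ s, blk κ (f i) := by
  ext a b
  simp [blk, Matrix.sum_apply]

lemma trace_eq_sum_blk (M : Matrix Ω Ω ℂ) :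
    M.trace = ∑ κ, (blk κ M).trace := by
  rw [Matrix.trace, show (∑ a, M.diag a) = ∑ κ' : K, ∑ b : I κ' × J κ',
      M ⟨κ', b⟩ ⟨κ', b⟩ from sigma_sum _]
  rfl

/-- block-product generators on Ω -/
def bgens : Set (Matrix Ω Ω ℂ) :=
  {M | ∃ (κ : K) (x : I κ → ℂ) (y : J κ → ℂ), M = embedBlock κ (prodMat x y)}

abbrev bcone (ρ : Matrix Ω Ω ℂ) : Prop := coneOf bgens ρ

lemma goodGens_bgens : GoodGens (bgens (K := K) (I := I) (J := J)) := by
  rintro g ⟨κ, x, y, rfl⟩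
  obtain ⟨r, hr, htr, hz⟩ := goodGens_prodGens (prodMat x y) ⟨x, y, rfl⟩
  exact ⟨r, hr, by rw [embedBlock_trace]; exact htr,
    fun h => by rw [hz h, embedBlock_zero]⟩

lemma embedBlock_sum (κ : K) {ι : Type*} (s : Finset ι)
    (f : ι → Matrix (I κ × J κ) (I κ × J κ) ℂ) :
    embedBlock κ (∑ i ∈ s, f i) = ∑ i ∈ s, embedBlock κ (f i) := by
  classical
  induction s using Finset.induction with
  | empty => simpa using embedBlock_zero κ
  | insert _ _ hx ih =>
    rw [Finset.sum_insert hx, Finset.sum_insert hx, embedBlock_add, ih]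

lemma bcone_embed {κ : K} {A : Matrix (I κ × J κ) (I κ × J κ) ℂ}
    (hA : kcone A) : bcone (embedBlock κ A) := by
  obtain ⟨n, c, g, hc, hg, rfl⟩ := hA
  rw [embedBlock_sum]
  refine coneOf_sum _ _ fun t _ => ?_
  rw [embedBlock_smul]
  refine coneOf_smul (hc t) ?_
  obtain ⟨x, y, hxy⟩ := hg t
  exact coneOf_gen ⟨κ, x, y, by rw [hxy]⟩

lemma kcone_blk {ρ : Matrix Ω Ω ℂ} (hρ : bcone ρ) (κ : K) : kcone (blk κ ρ) := by
  obtain ⟨n, c, g, hc, hg, rfl⟩ := hρ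
  rw [blk_sum]
  refine coneOf_sum _ _ fun t _ => ?_
  obtain ⟨κ', x, y, hxy⟩ := hg t
  rw [hxy, blk_smul]
  refine coneOf_smul (hc t) ?_
  by_cases h : κ' = κ
  · subst h; rw [blk_embed_same]; exact coneOf_gen ⟨x, y, rfl⟩
  · rw [blk_embed_ne h]; exact coneOf_zero _

end Block

section BlockSepIff
variable {K : Type*} [Fintype K] [DecidableEq K] {I J : K → Type*}
  [∀ κ, Fintype (I κ)] [∀ κ, Fintype (J κ)]

local notation "Ω" => (κ : K) × (I κ × J κ)

lemma prodVec_smul_left {I' J' : Type*} (s : ℂ) (x : I' → ℂ) (y : J' → ℂ) :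
    prodVec (s • x) y = s • prodVec x y := by
  funext a
  simp only [prodVec, Pi.smul_apply, smul_eq_mul]
  ring

lemma rankOne_real_smul {α : Type*} [Fintype α] (s : ℝ) (v : α → ℂ) :
    rankOne (((s : ℂ)) • v) = (((s ^ 2 : ℝ)) : ℂ) • rankOne v := by
  ext a b
  simp only [rankOne, Matrix.of_apply, Pi.smul_apply, smul_eq_mul, map_mul,
    Matrix.smul_apply, Complex.conj_ofReal]
  push_cast
  ring

lemma prodMat_real_smul_left {I' J' : Type*} [Fintype I'] [Fintype J'] (s : ℝ)
    (x : I' → ℂ) (y : J' → ℂ) :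
    prodMat (((s : ℂ)) • x) y = (((s ^ 2 : ℝ)) : ℂ) • prodMat x y := by
  rw [prodMat, prodVec_smul_left, rankOne_real_smul]
  rfl

lemma smul_normSq_sum {α : Type*} [Fintype α] (s : ℝ) (x : α → ℂ) :
    ∑ a, Complex.normSq ((((s : ℂ)) • x) a) = s ^ 2 * ∑ a, Complex.normSq (x a) := by
  rw [Finset.mul_sum]
  refine Finset.sum_congr rfl fun a _ => ?_
  simp only [Pi.smul_apply, smul_eq_mul, Complex.normSq_mul, Complex.normSq_ofReal]
  ring

/-- extension by zero of a product vector on block κ -/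
noncomputable def bvec (κ : K) (x : I κ → ℂ) (y : J κ → ℂ) : Ω → ℂ :=
  fun a => if h : a.1 = κ then prodVec x y (h ▸ a.2) else 0

lemma bvec_apply (κ : K) (x : I κ → ℂ) (y : J κ → ℂ) (a : Ω) (h : a.1 = κ) :
    bvec κ x y a = prodVec x y (h ▸ a.2) := dif_pos h

lemma bvec_apply_ne (κ : K) (x : I κ → ℂ) (y : J κ → ℂ) (a : Ω) (h : a.1 ≠ κ) :
    bvec κ x y a = 0 := dif_neg h

lemma bvec_same (κ : K) (x : I κ → ℂ) (y : J κ → ℂ) (i : I κ) (j : J κ) :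
    bvec κ x y ⟨κ, (i, j)⟩ = x i * y j :=
  bvec_apply κ x y ⟨κ, (i, j)⟩ rfl

lemma bvec_struct (κ : K) (x : I κ → ℂ) (y : J κ → ℂ) :
    (∀ (i : I κ) (j : J κ), bvec κ x y ⟨κ, (i, j)⟩ = x i * y j) ∧
    (∀ κ' : K, κ' ≠ κ → ∀ b : I κ' × J κ', bvec κ x y ⟨κ', b⟩ = 0) :=
  ⟨fun i j => bvec_same κ x y i j, fun κ' h b => bvec_apply_ne κ x y ⟨κ', b⟩ h⟩

lemma rankOne_bvec (κ : K) (x : I κ → ℂ) (y : J κ → ℂ) :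
    rankOne (bvec κ x y) = embedBlock κ (prodMat x y) := by
  ext a b
  by_cases h₁ : a.1 = κ
  · by_cases h₂ : b.1 = κ
    · rw [embedBlock_apply κ _ a b h₁ h₂]
      simp only [rankOne, Matrix.of_apply, bvec_apply κ x y a h₁, bvec_apply κ x y b h₂]
      rfl
    · simp [rankOne, bvec_apply_ne κ x y b h₂, embedBlock_apply_ne_right _ _ h₂]
  · simp [rankOne, bvec_apply_ne κ x y a h₁, embedBlock_apply_ne_left _ h₁]

lemma bvec_normSq (κ : K) (x : I κ → ℂ) (y : J κ → ℂ) :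
    ∑ a, Complex.normSq (bvec κ x y a) =
      (∑ i, Complex.normSq (x i)) * (∑ j, Complex.normSq (y j)) := by
  rw [show (∑ a, Complex.normSq (bvec κ x y a)) = ∑ κ' : K, ∑ b : I κ' × J κ',
      Complex.normSq (bvec κ x y ⟨κ', b⟩) from sigma_sum _]
  rw [Finset.sum_eq_single κ]
  · rw [← prodVec_normSq]
    exact Finset.sum_congr rfl fun b _ => by rw [bvec_apply κ x y ⟨κ, b⟩ rfl]
  · intro κ' _ h
    exact Finset.sum_eq_zero fun b _ => by rw [bvec_apply_ne κ x y ⟨κ', b⟩ h]; simp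
  · intro h
    exact absurd (Finset.mem_univ κ) h

lemma rankOne_eq_embed {κ : K} {v : Ω → ℂ} {x : I κ → ℂ} {y : J κ → ℂ}
    (hv1 : ∀ (i : I κ) (j : J κ), v ⟨κ, (i, j)⟩ = x i * y j)
    (hv2 : ∀ κ' : K, κ' ≠ κ → ∀ b : I κ' × J κ', v ⟨κ', b⟩ = 0) :
    rankOne v = embedBlock κ (prodMat x y) := by
  have key : v = bvec κ x y := by
    funext a
    obtain ⟨κ₁, b₁⟩ := a
    by_cases h₁ : κ₁ = κ
    · subst h₁
      rw [bvec_apply κ₁ x y ⟨κ₁, b₁⟩ rfl]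
      have := hv1 b₁.1 b₁.2
      simpa [prodVec] using this
    · rw [hv2 κ₁ h₁ b₁, bvec_apply_ne κ x y ⟨κ₁, b₁⟩ h₁]
  rw [key, rankOne_bvec]

lemma bcone_of_blockSep {ρ : Matrix Ω Ω ℂ} (h : BlockSep ρ) :
    bcone ρ ∧ ρ.trace = 1 := by
  obtain ⟨n, lam, v, hlam, hsum, hnorm, hstruct, rfl⟩ := h
  choose κf xf yf hv1 hv2 using hstruct
  have hrk : ∀ t, Matrix.of (fun a b => v t a * starRingEnd ℂ (v t b)) =
      embedBlock (κf t) (prodMat (xf t) (yf t)) :=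
    fun t => rankOne_eq_embed (hv1 t) (hv2 t)
  constructor
  · refine coneOf_sum _ _ fun t _ => coneOf_smul (hlam t) ?_
    rw [hrk t]
    exact coneOf_gen ⟨κf t, xf t, yf t, rfl⟩
  · rw [Matrix.trace_sum]
    have : ∀ t, ((lam t : ℂ) • Matrix.of (fun a b => v t a * starRingEnd ℂ (v t b))).trace
        = (lam t : ℂ) := by
      intro t
      rw [Matrix.trace_smul]
      rw [show Matrix.of (fun a b => v t a * starRingEnd ℂ (v t b)) = rankOne (v t) from rfl]
      rw [rankOne_trace, hnorm t]
      simp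
    rw [Finset.sum_congr rfl fun t _ => this t]
    exact_mod_cast congrArg (Complex.ofReal) hsum

variable [Nonempty K] [∀ κ, Nonempty (I κ)] [∀ κ, Nonempty (J κ)]

/-- normalized (or default) block unit vector attached to a block product pair -/
noncomputable def nbvec (κ : K) (x : I κ → ℂ) (y : J κ → ℂ) : Ω → ℂ :=
  if (∑ i, Complex.normSq (x i)) * (∑ j, Complex.normSq (y j)) = 0
  then bvec (Classical.arbitrary K) (stdv (Classical.arbitrary _)) (stdv (Classical.arbitrary _))
  else bvec κ
    ((((Real.sqrt ((∑ i, Complex.normSq (x i)) * (∑ j, Complex.normSq (y j))))⁻¹ : ℝ) : ℂ) • x) y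

lemma nbvec_normSq (κ : K) (x : I κ → ℂ) (y : J κ → ℂ) :
    ∑ a, Complex.normSq (nbvec κ x y a) = 1 := by
  unfold nbvec
  by_cases h : (∑ i, Complex.normSq (x i)) * (∑ j, Complex.normSq (y j)) = 0
  · rw [if_pos h, bvec_normSq, stdv_normSq, stdv_normSq, one_mul]
  · rw [if_neg h, bvec_normSq, smul_normSq_sum, inv_pow,
      Real.sq_sqrt (mul_nonneg (Finset.sum_nonneg fun _ _ => Complex.normSq_nonneg _)
        (Finset.sum_nonneg fun _ _ => Complex.normSq_nonneg _)),
      mul_assoc, inv_mul_cancel₀ h]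

lemma nbvec_struct (κ : K) (x : I κ → ℂ) (y : J κ → ℂ) :
    ∃ (κ' : K) (x' : I κ' → ℂ) (y' : J κ' → ℂ),
      (∀ (i : I κ') (j : J κ'), nbvec κ x y ⟨κ', (i, j)⟩ = x' i * y' j) ∧
      (∀ κ'' : K, κ'' ≠ κ' → ∀ b : I κ'' × J κ'', nbvec κ x y ⟨κ'', b⟩ = 0) := by
  unfold nbvec
  by_cases h : (∑ i, Complex.normSq (x i)) * (∑ j, Complex.normSq (y j)) = 0
  · rw [if_pos h]
    exact ⟨Classical.arbitrary K, _, _, (bvec_struct _ _ _).1, (bvec_struct _ _ _).2⟩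
  · rw [if_neg h]
    exact ⟨κ, _, _, (bvec_struct _ _ _).1, (bvec_struct _ _ _).2⟩

lemma nbvec_smul_eq (c : ℝ) (κ : K) (x : I κ → ℂ) (y : J κ → ℂ) :
    ((c * ((∑ i, Complex.normSq (x i)) * (∑ j, Complex.normSq (y j))) : ℝ) : ℂ) •
      rankOne (nbvec κ x y) = (c : ℂ) • embedBlock κ (prodMat x y) := by
  unfold nbvec
  by_cases h : (∑ i, Complex.normSq (x i)) * (∑ j, Complex.normSq (y j)) = 0
  · rw [if_pos h]
    have hp0 : prodMat x y = 0 := rankOne_eq_zero (by rw [prodVec_normSq]; exact h)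
    rw [hp0, embedBlock_zero, h]
    simp
  · rw [if_neg h, rankOne_bvec, prodMat_real_smul_left, embedBlock_smul, smul_smul,
      inv_pow, Real.sq_sqrt (mul_nonneg (Finset.sum_nonneg fun _ _ => Complex.normSq_nonneg _)
        (Finset.sum_nonneg fun _ _ => Complex.normSq_nonneg _))]
    congr 1
    rw [← Complex.ofReal_mul]
    congr 1
    field_simp
    rw [mul_assoc, mul_div_assoc, div_self h, mul_one]

lemma blockSep_of_bcone {ρ : Matrix Ω Ω ℂ} (h : bcone ρ) (htr : ρ.trace = 1) :
    BlockSep ρ := by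
  classical
  obtain ⟨n, c, g, hc, hg, rfl⟩ := h
  choose κf xf yf hxy using hg
  refine ⟨n, fun t => c t *
      ((∑ i, Complex.normSq (xf t i)) * (∑ j, Complex.normSq (yf t j))),
    fun t => nbvec (κf t) (xf t) (yf t),
    fun t => mul_nonneg (hc t) (mul_nonneg
      (Finset.sum_nonneg fun _ _ => Complex.normSq_nonneg _)
      (Finset.sum_nonneg fun _ _ => Complex.normSq_nonneg _)), ?_,
    fun t => nbvec_normSq _ _ _, fun t => nbvec_struct _ _ _, ?_⟩
  · have h2 : (∑ t, (c t : ℂ) • g t).trace = ((∑ t, c t *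
        ((∑ i, Complex.normSq (xf t i)) * (∑ j, Complex.normSq (yf t j))) : ℝ) : ℂ) := by
      rw [Matrix.trace_sum]
      push_cast
      refine Finset.sum_congr rfl fun t _ => ?_
      rw [Matrix.trace_smul, hxy t, embedBlock_trace, prodMat_trace]
      push_cast
      simp [smul_eq_mul]
    rw [h2] at htr
    exact_mod_cast htr
  · refine Finset.sum_congr rfl fun t _ => ?_
    rw [show (Matrix.of fun a b => nbvec (κf t) (xf t) (yf t) a *
        starRingEnd ℂ (nbvec (κf t) (xf t) (yf t) b)) =
        rankOne (nbvec (κf t) (xf t) (yf t)) from rfl]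
    rw [nbvec_smul_eq, hxy t]
end BlockSepIff

section Robust
variable {α : Type*} [Fintype α]

lemma mem_robust_iff (Sep Cone : Matrix α α ℂ → Prop)
    (hSC : ∀ σ, Sep σ ↔ Cone σ ∧ σ.trace = 1)
    (hsmul : ∀ (r : ℝ) σ, 0 ≤ r → Cone σ → Cone ((r : ℂ) • σ))
    (hzero : ∀ σ, Cone σ → σ.trace = 0 → σ = 0)
    (hex : ∃ σ₀, Sep σ₀)
    {ρ : Matrix α α ℂ} (hρ : ρ.trace = 1) (t : ℝ) :
    (0 ≤ t ∧ ∃ σ, Sep σ ∧ Sep (((1 + t : ℝ) : ℂ)⁻¹ • (ρ + (t : ℂ) • σ)))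
      ↔ (0 ≤ t ∧ ∃ D, Cone D ∧ D.trace = (t : ℂ) ∧ Cone (ρ + D)) := by
  have h1t : 0 ≤ t → ((1 + t : ℝ) : ℂ) ≠ 0 := fun ht hh => by
    have : (1 + t : ℝ) = 0 := by exact_mod_cast hh
    linarith
  constructor
  · rintro ⟨ht, σ, hσ, hτ⟩
    obtain ⟨hσc, hσtr⟩ := (hSC σ).mp hσ
    obtain ⟨hτc, -⟩ := (hSC _).mp hτ
    refine ⟨ht, (t : ℂ) • σ, hsmul t σ ht hσc, ?_, ?_⟩
    · rw [Matrix.trace_smul, hσtr]; simp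
    · have h2 := hsmul (1 + t) _ (by linarith) hτc
      rw [show ((1 + t : ℝ) : ℂ) • (((1 + t : ℝ) : ℂ)⁻¹ • (ρ + (t : ℂ) • σ))
          = ρ + (t : ℂ) • σ by rw [smul_smul, mul_inv_cancel₀ (h1t ht), one_smul]] at h2
      exact h2
  · rintro ⟨ht, D, hD, hDtr, hρD⟩
    rcases eq_or_lt_of_le ht with h0 | hpos
    · obtain ⟨σ₀, hσ₀⟩ := hex
      have ht0 : t = 0 := h0.symm
      subst ht0
      have hD0 : D = 0 := hzero D hD (by rw [hDtr]; simp)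
      refine ⟨le_refl 0, σ₀, hσ₀, ?_⟩
      have : ((1 + (0 : ℝ) : ℝ) : ℂ)⁻¹ • (ρ + ((0 : ℝ) : ℂ) • σ₀) = ρ := by
        norm_num
      rw [this]
      exact (hSC ρ).mpr ⟨by simpa [hD0] using hρD, hρ⟩
    · have htne : (t : ℂ) ≠ 0 := by exact_mod_cast ne_of_gt hpos
      refine ⟨ht, ((t⁻¹ : ℝ) : ℂ) • D, ?_, ?_⟩
      · refine (hSC _).mpr ⟨hsmul t⁻¹ D (inv_nonneg.mpr ht) hD, ?_⟩
        rw [Matrix.trace_smul, hDtr]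
        rw [smul_eq_mul, ← Complex.ofReal_mul, inv_mul_cancel₀ (ne_of_gt hpos),
          Complex.ofReal_one]
      · have hmat : ((1 + t : ℝ) : ℂ)⁻¹ • (ρ + (t : ℂ) • ((t⁻¹ : ℝ) : ℂ) • D)
            = ((1 + t : ℝ) : ℂ)⁻¹ • (ρ + D) := by
          congr 2
          rw [smul_smul, show (t : ℂ) * ((t⁻¹ : ℝ) : ℂ) = 1 by
            rw [← Complex.ofReal_mul]; rw [mul_inv_cancel₀ (ne_of_gt hpos)]; simp,
            one_smul]
        rw [hmat]
        refine (hSC _).mpr ⟨?_, ?_⟩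
        · have := hsmul (1 + t)⁻¹ _ (by positivity) hρD
          rwa [Complex.ofReal_inv] at this
        · rw [Matrix.trace_smul, Matrix.trace_add, hρ, hDtr, smul_eq_mul]
          rw [show (1 : ℂ) + (t : ℂ) = ((1 + t : ℝ) : ℂ) by push_cast; ring]
          exact inv_mul_cancel₀ (h1t ht)
end Robust

section Span
open Complex

noncomputable def gam : Fin 4 → ℂ := ![1/2, Complex.I/2, -(1+Complex.I)/2, -(1+Complex.I)/2]

noncomputable def ind {α : Type*} [DecidableEq α] (i : α) : α → ℂ :=
  fun a => if a = i then 1 else 0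

noncomputable def uvec {α : Type*} [DecidableEq α] (i i' : α) : Fin 4 → α → ℂ :=
  ![fun a => ind i a + ind i' a, fun a => ind i a + Complex.I * ind i' a, ind i, ind i']

lemma E1 {α : Type*} [DecidableEq α] (i i' a b : α) :
    ∑ s : Fin 4, gam s * (uvec i i' s a * (starRingEnd ℂ) (uvec i i' s b))
      = if a = i ∧ b = i' then 1 else 0 := by
  rw [Fin.sum_univ_four]
  simp only [gam, uvec, ind, Matrix.cons_val_zero, Matrix.cons_val_one, Matrix.head_cons,
    Matrix.cons_val_two, Matrix.tail_cons, Matrix.cons_val_three]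
  by_cases hii : i' = i
  · subst hii
    by_cases h1 : a = i' <;> by_cases h3 : b = i' <;>
      simp only [h1, h3, eq_self_iff_true, if_true, if_false, and_self, and_true, true_and,
        and_false, false_and, not_false_iff, if_neg, map_add, map_mul, map_one, map_zero,
        Complex.conj_I] <;>
      norm_num [Complex.ext_iff]
  · have hii2 : ¬ i = i' := fun h => hii h.symm
    by_cases h1 : a = i <;> by_cases h2 : a = i' <;> by_cases h3 : b = i <;> by_cases h4 : b = i' <;>
      first
        | exact absurd (h1.symm.trans h2) hii2
        | exact absurd (h3.symm.trans h4) hii2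
        | (simp only [h1, h2, h3, h4, hii, hii2, eq_self_iff_true, if_true, if_false, and_self,
            and_true, true_and, and_false, false_and, not_false_iff, if_neg, map_add, map_mul,
            map_one, map_zero, Complex.conj_I] <;>
           norm_num [Complex.ext_iff])

variable {I J : Type*} [Fintype I] [Fintype J] [DecidableEq I] [DecidableEq J]

lemma E2 (i i' : I) (j j' : J) (a b : I × J) :
    ∑ s : Fin 4, ∑ s' : Fin 4, (gam s * gam s') * prodMat (uvec i i' s) (uvec j j' s') a b
      = if a = (i, j) ∧ b = (i', j') then 1 else 0 := by
  have step1 : ∀ s s' : Fin 4, (gam s * gam s') * prodMat (uvec i i' s) (uvec j j' s') a b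
      = (gam s * (uvec i i' s a.1 * (starRingEnd ℂ) (uvec i i' s b.1))) *
        (gam s' * (uvec j j' s' a.2 * (starRingEnd ℂ) (uvec j j' s' b.2))) := by
    intro s s'
    simp only [prodMat, rankOne, prodVec, Matrix.of_apply, map_mul]
    ring
  rw [Finset.sum_congr rfl fun s _ => Finset.sum_congr rfl fun s' _ => step1 s s']
  rw [← Finset.sum_mul_sum, E1, E1]
  by_cases h1 : a.1 = i <;> by_cases h2 : a.2 = j <;> by_cases h3 : b.1 = i' <;>
    by_cases h4 : b.2 = j' <;>
    simp [Prod.ext_iff, h1, h2, h3, h4]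

lemma matrix_decomp (M : Matrix (I × J) (I × J) ℂ) :
    M = ∑ p : (I × I) × (J × J) × (Fin 4 × Fin 4),
      (M (p.1.1, p.2.1.1) (p.1.2, p.2.1.2) * (gam p.2.2.1 * gam p.2.2.2)) •
        prodMat (uvec p.1.1 p.1.2 p.2.2.1) (uvec p.2.1.1 p.2.1.2 p.2.2.2) := by
  ext a b
  rw [Matrix.sum_apply]
  simp only [Matrix.smul_apply, smul_eq_mul, Fintype.sum_prod_type]
  have inner : ∀ (i i' : I) (j j' : J),
      (∑ s : Fin 4, ∑ s' : Fin 4, M (i, j) (i', j') * (gam s * gam s') *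
        prodMat (uvec i i' s) (uvec j j' s') a b)
      = M (i, j) (i', j') * (if a = (i, j) ∧ b = (i', j') then 1 else 0) := by
    intro i i' j j'
    rw [← E2 i i' j j' a b, Finset.mul_sum]
    refine Finset.sum_congr rfl fun s _ => ?_
    rw [Finset.mul_sum]
    refine Finset.sum_congr rfl fun s' _ => ?_
    ring
  rw [show (∑ i : I, ∑ i' : I, ∑ j : J, ∑ j' : J, ∑ s : Fin 4, ∑ s' : Fin 4,
      M (i, j) (i', j') * (gam s * gam s') * prodMat (uvec i i' s) (uvec j j' s') a b)
      = ∑ i : I, ∑ i' : I, ∑ j : J, ∑ j' : J,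
        M (i, j) (i', j') * (if a = (i, j) ∧ b = (i', j') then 1 else 0) from
    Finset.sum_congr rfl fun i _ => Finset.sum_congr rfl fun i' _ =>
      Finset.sum_congr rfl fun j _ => Finset.sum_congr rfl fun j' _ => inner i i' j j']
  simp [Prod.ext_iff, ite_and, mul_ite, mul_one, mul_zero, Finset.sum_ite_eq]

lemma max_neg_add (r : ℝ) : r + max (-r) 0 = max r 0 := by
  rcases le_total r 0 with h | h
  · rw [max_eq_left (by linarith : (0:ℝ) ≤ -r), max_eq_right h]
    ring
  · rw [max_eq_right (by linarith : -r ≤ (0:ℝ)), max_eq_left h]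
    ring

open Matrix in
lemma kcone_diff (M : Matrix (I × J) (I × J) ℂ) (hM : Mᴴ = M) :
    ∃ D, kcone D ∧ kcone (M + D) := by
  classical
  set g : (I × I) × (J × J) × (Fin 4 × Fin 4) → Matrix (I × J) (I × J) ℂ := fun p =>
    prodMat (uvec p.1.1 p.1.2 p.2.2.1) (uvec p.2.1.1 p.2.1.2 p.2.2.2) with hg
  set cc : (I × I) × (J × J) × (Fin 4 × Fin 4) → ℂ := fun p =>
    M (p.1.1, p.2.1.1) (p.1.2, p.2.1.2) * (gam p.2.2.1 * gam p.2.2.2) with hcc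
  have hA : M = ∑ p, cc p • g p := matrix_decomp M
  have hgH : ∀ p, (g p)ᴴ = g p := fun p => rankOne_conjTranspose _
  have h2 : M = ∑ p, (starRingEnd ℂ) (cc p) • g p := by
    conv_lhs => rw [← hM, hA]
    rw [conjTranspose_sum]
    exact Finset.sum_congr rfl fun p _ => by
      rw [conjTranspose_smul, hgH p]; rfl
  have hherm : M = ∑ p, (((cc p).re : ℝ) : ℂ) • g p := by
    have key : ∑ p, (((cc p).re : ℝ) : ℂ) • g p
        = (2⁻¹ : ℂ) • (∑ p, cc p • g p + ∑ p, (starRingEnd ℂ) (cc p) • g p) := by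
      rw [← Finset.sum_add_distrib, Finset.smul_sum]
      refine Finset.sum_congr rfl fun p _ => ?_
      rw [← add_smul, smul_smul, Complex.add_conj]
      congr 1
      push_cast
      ring
    rw [key, ← hA, ← h2, ← two_smul ℂ M, smul_smul]
    norm_num
  refine ⟨∑ p, ((max (-(cc p).re) 0 : ℝ) : ℂ) • g p, ?_, ?_⟩
  · exact coneOf_sum _ _ fun p _ =>
      coneOf_smul (le_max_right _ _) (coneOf_gen ⟨_, _, rfl⟩)
  · have : M + ∑ p, ((max (-(cc p).re) 0 : ℝ) : ℂ) • g p
        = ∑ p, ((max ((cc p).re) 0 : ℝ) : ℂ) • g p := by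
      rw [hherm, ← Finset.sum_add_distrib]
      refine Finset.sum_congr rfl fun p _ => ?_
      rw [← add_smul, ← Complex.ofReal_add, max_neg_add]
    rw [this]
    exact coneOf_sum _ _ fun p _ =>
      coneOf_smul (le_max_right _ _) (coneOf_gen ⟨_, _, rfl⟩)
end Span

end Prop4

open Prop4 in
/-- paper's Proposition 4: for a block-diagonal state
`ρ = ∑_κ p_κ ρ̂_κ`, the robustness of `ρ` equals the weighted sum of the bipartite
robustnesses of its blocks: `R(ρ) = ∑_κ p_κ R(ρ_κ)`. -/
theorem robustness_of_block_diagonal_state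
    {K : Type*} [Fintype K] [DecidableEq K] [Nonempty K] {I J : K → Type*}
    [∀ κ, Fintype (I κ)] [∀ κ, Nonempty (I κ)]
    [∀ κ, Fintype (J κ)] [∀ κ, Nonempty (J κ)]
    (ρ : Matrix ((κ : K) × (I κ × J κ)) ((κ : K) × (I κ × J κ)) ℂ)
    (hpsd : ρ.PosSemidef) (htr : ρ.trace = 1)
    (p : K → ℝ) (hp : ∀ κ, 0 ≤ p κ) (hpsum : ∑ κ, p κ = 1)
    (ρb : (κ : K) → Matrix (I κ × J κ) (I κ × J κ) ℂ)
    (hbpsd : ∀ κ, (ρb κ).PosSemidef) (hbtr : ∀ κ, (ρb κ).trace = 1)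
    (hdec : ρ = ∑ κ, (p κ : ℂ) • embedBlock κ (ρb κ)) :
    sInf {t : ℝ | 0 ≤ t ∧ ∃ σ, BlockSep σ ∧
        BlockSep (((1 + t : ℝ) : ℂ)⁻¹ • (ρ + (t : ℂ) • σ))}
      = ∑ κ, p κ *
          sInf {t : ℝ | 0 ≤ t ∧ ∃ σκ, KronSep σκ ∧
            KronSep (((1 + t : ℝ) : ℂ)⁻¹ • (ρb κ + (t : ℂ) • σκ))} := by
  classical
  haveI : ∀ κ, DecidableEq (I κ) := fun κ => Classical.decEq _
  haveI : ∀ κ, DecidableEq (J κ) := fun κ => Classical.decEq _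
  set S : Set ℝ := {t : ℝ | 0 ≤ t ∧ ∃ σ, BlockSep σ ∧
      BlockSep (((1 + t : ℝ) : ℂ)⁻¹ • (ρ + (t : ℂ) • σ))} with hS
  set Sk : K → Set ℝ := fun κ => {t : ℝ | 0 ≤ t ∧ ∃ σκ, KronSep σκ ∧
      KronSep (((1 + t : ℝ) : ℂ)⁻¹ • (ρb κ + (t : ℂ) • σκ))} with hSk
  -- separability ↔ cone characterizations
  have hKronIff : ∀ (κ : K) (σ : Matrix (I κ × J κ) (I κ × J κ) ℂ),
      KronSep σ ↔ kcone σ ∧ σ.trace = 1 :=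
    fun κ σ => ⟨kcone_of_kronSep, fun hh => kronSep_of_kcone hh.1 hh.2⟩
  have hBlockIff : ∀ σ : Matrix ((κ : K) × (I κ × J κ)) ((κ : K) × (I κ × J κ)) ℂ,
      BlockSep σ ↔ bcone σ ∧ σ.trace = 1 :=
    fun σ => ⟨bcone_of_blockSep, fun hh => blockSep_of_bcone hh.1 hh.2⟩
  -- existence of separable states
  have hexK : ∀ κ : K, ∃ σ : Matrix (I κ × J κ) (I κ × J κ) ℂ, KronSep σ := by
    intro κ
    refine ⟨prodMat (stdv (Classical.arbitrary (I κ))) (stdv (Classical.arbitrary (J κ))),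
      (hKronIff _ _).mpr ⟨coneOf_gen ⟨_, _, rfl⟩, ?_⟩⟩
    rw [prodMat_trace, stdv_normSq, stdv_normSq]
    norm_num
  have hexB : ∃ σ : Matrix ((κ : K) × (I κ × J κ)) ((κ : K) × (I κ × J κ)) ℂ,
      BlockSep σ := by
    refine ⟨embedBlock (Classical.arbitrary K)
      (prodMat (stdv (Classical.arbitrary _)) (stdv (Classical.arbitrary _))),
      (hBlockIff _).mpr ⟨coneOf_gen ⟨_, _, _, rfl⟩, ?_⟩⟩
    rw [embedBlock_trace, prodMat_trace, stdv_normSq, stdv_normSq]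
    norm_num
  -- membership characterizations
  have memK : ∀ (κ : K) (t : ℝ), t ∈ Sk κ ↔
      (0 ≤ t ∧ ∃ D, kcone D ∧ D.trace = (t : ℂ) ∧ kcone (ρb κ + D)) := by
    intro κ t
    exact mem_robust_iff KronSep kcone (hKronIff κ)
      (fun r σ hr hσ => coneOf_smul hr hσ)
      (fun σ hσ h0 => coneOf_trace_zero goodGens_prodGens hσ h0)
      (hexK κ) (hbtr κ) t
  have memB : ∀ t : ℝ, t ∈ S ↔
      (0 ≤ t ∧ ∃ D, bcone D ∧ D.trace = (t : ℂ) ∧ bcone (ρ + D)) := by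
    intro t
    exact mem_robust_iff BlockSep bcone hBlockIff
      (fun r σ hr hσ => coneOf_smul hr hσ)
      (fun σ hσ h0 => coneOf_trace_zero goodGens_bgens hσ h0)
      hexB htr t
  -- nonemptiness of the block sets
  have hSkne : ∀ κ : K, (Sk κ).Nonempty := by
    intro κ
    obtain ⟨D, hD, hMD⟩ := kcone_diff (ρb κ) (hbpsd κ).1
    obtain ⟨r, hr0, hrtr⟩ := coneOf_trace goodGens_prodGens hD
    exact ⟨r, (memK κ r).mpr ⟨hr0, D, hD, hrtr, hMD⟩⟩
  have hSkbdd : ∀ κ : K, BddBelow (Sk κ) := fun κ => ⟨0, fun b hb => hb.1⟩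
  have hSbdd : BddBelow S := ⟨0, fun b hb => hb.1⟩
  -- from per-block members to a member of S
  have mkS : ∀ tk : K → ℝ, (∀ κ, tk κ ∈ Sk κ) → (∑ κ, p κ * tk κ) ∈ S := by
    intro tk htk
    have h := fun κ => (memK κ (tk κ)).mp (htk κ)
    choose ht0 D hD hDtr hρD using h
    refine (memB _).mpr ⟨Finset.sum_nonneg fun κ _ => mul_nonneg (hp κ) (ht0 κ),
      ∑ κ, (p κ : ℂ) • embedBlock κ (D κ), ?_, ?_, ?_⟩
    · exact coneOf_sum _ _ fun κ _ => coneOf_smul (hp κ) (bcone_embed (hD κ))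
    · rw [Matrix.trace_sum]
      push_cast
      refine Finset.sum_congr rfl fun κ _ => ?_
      rw [Matrix.trace_smul, embedBlock_trace, hDtr κ]
      simp [smul_eq_mul]
    · have : ρ + ∑ κ, (p κ : ℂ) • embedBlock κ (D κ)
          = ∑ κ, (p κ : ℂ) • embedBlock κ (ρb κ + D κ) := by
        rw [hdec, ← Finset.sum_add_distrib]
        refine Finset.sum_congr rfl fun κ _ => ?_
        rw [embedBlock_add, smul_add]
      rw [this]
      exact coneOf_sum _ _ fun κ _ => coneOf_smul (hp κ) (bcone_embed (hρD κ))
  -- S is nonempty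
  have hSne : S.Nonempty := by
    choose tk htk using hSkne
    exact ⟨∑ κ, p κ * tk κ, mkS tk htk⟩
  -- upper bound
  have upper : sInf S ≤ ∑ κ, p κ * sInf (Sk κ) := by
    refine le_of_forall_pos_le_add fun ε hε => ?_
    have hch : ∀ κ : K, ∃ a ∈ Sk κ, a < sInf (Sk κ) + ε := fun κ =>
      exists_lt_of_csInf_lt (hSkne κ) (lt_add_of_pos_right _ hε)
    choose tk htk hlt using hch
    have h1 : sInf S ≤ ∑ κ, p κ * tk κ := csInf_le hSbdd (mkS tk htk)
    have h2 : ∑ κ, p κ * tk κ ≤ ∑ κ, p κ * (sInf (Sk κ) + ε) :=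
      Finset.sum_le_sum fun κ _ =>
        mul_le_mul_of_nonneg_left (le_of_lt (hlt κ)) (hp κ)
    have h3 : ∑ κ, p κ * (sInf (Sk κ) + ε) = (∑ κ, p κ * sInf (Sk κ)) + ε := by
      rw [show (∑ κ, p κ * (sInf (Sk κ) + ε)) = ∑ κ, (p κ * sInf (Sk κ) + p κ * ε) from
        Finset.sum_congr rfl fun κ _ => by ring]
      rw [Finset.sum_add_distrib, ← Finset.sum_mul, hpsum, one_mul]
    linarith
  -- lower bound
  have lower : ∑ κ, p κ * sInf (Sk κ) ≤ sInf S := by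
    refine le_csInf hSne fun t htS => ?_
    obtain ⟨ht0, D, hD, hDtr, hρD⟩ := (memB t).mp htS
    have hblkρ : ∀ κ, blk κ ρ = (p κ : ℂ) • ρb κ := by
      intro κ
      rw [hdec, blk_sum]
      rw [Finset.sum_eq_single κ]
      · rw [blk_smul, blk_embed_same]
      · intro κ' _ hne
        rw [blk_smul, blk_embed_ne hne, smul_zero]
      · intro hh
        exact absurd (Finset.mem_univ κ) hh
    choose d hd0 hdtr using fun κ => coneOf_trace goodGens_prodGens (kcone_blk hD κ)
    have hdsum : ∑ κ, d κ = t := by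
      have hcx : ((∑ κ, d κ : ℝ) : ℂ) = (t : ℂ) := by
        rw [← hDtr, trace_eq_sum_blk]
        push_cast
        exact (Finset.sum_congr rfl fun κ _ => (hdtr κ).symm)
      exact_mod_cast hcx
    have hbound : ∀ κ, p κ * sInf (Sk κ) ≤ d κ := by
      intro κ
      rcases eq_or_lt_of_le (hp κ) with h0 | hpos
      · rw [← h0, zero_mul]; exact hd0 κ
      · have hpne : (p κ : ℝ) ≠ 0 := ne_of_gt hpos
        have hmem : d κ / p κ ∈ Sk κ := by
          refine (memK κ _).mpr ⟨div_nonneg (hd0 κ) (le_of_lt hpos),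
            (((p κ)⁻¹ : ℝ) : ℂ) • blk κ D, coneOf_smul (inv_nonneg.mpr (hp κ)) (kcone_blk hD κ),
            ?_, ?_⟩
          · rw [Matrix.trace_smul, hdtr κ, smul_eq_mul, ← Complex.ofReal_mul]
            congr 1
            field_simp
          · have heq : ρb κ + (((p κ)⁻¹ : ℝ) : ℂ) • blk κ D
                = (((p κ)⁻¹ : ℝ) : ℂ) • blk κ (ρ + D) := by
              rw [blk_add, hblkρ, smul_add, smul_smul, ← Complex.ofReal_mul,
                inv_mul_cancel₀ hpne, Complex.ofReal_one, one_smul]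
            rw [heq]
            exact coneOf_smul (inv_nonneg.mpr (hp κ)) (kcone_blk hρD κ)
        have hle : sInf (Sk κ) ≤ d κ / p κ := csInf_le (hSkbdd κ) hmem
        calc p κ * sInf (Sk κ) ≤ p κ * (d κ / p κ) :=
              mul_le_mul_of_nonneg_left hle (hp κ)
          _ = d κ := by field_simp
    calc ∑ κ, p κ * sInf (Sk κ) ≤ ∑ κ, d κ := Finset.sum_le_sum fun κ _ => hbound κ
      _ = t := hdsum
  exact le_antisymm upper lower
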